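/- Suppose a graph class closed under clique replacement is (t,γ)-conditionally χ-bounded, i.e., every G in the class with α(G) ≥ t satisfies χ(G) ≤ γ·ω(G). Then for every G in the class: either α(G) ≤ t−1 (so the t-level SoS relaxation of the independent set polytope is exact), or every point of QSTAB(G) has objective value at most γ times the maximum weight independent set; consequently t rounds of SoS give a γ-estimation for maximum weight independent set on this class. -/

import Mathlib

open Finset

variable {V : Type*}

/-- `s` is an independent set of `G`. -/
def IsIndep (G : SimpleGraph V) (s : Finset V) : Prop :=
  ∀ u ∈ s, ∀ w ∈ s, u ≠ w → ¬ G.Adj u w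

/-- The independence number `α(G)`. -/
noncomputable def indepNum [Fintype V] (G : SimpleGraph V) : ℕ :=
  sSup {n | ∃ s : Finset V, s.card = n ∧ IsIndep G s}

/-- The clique number `ω(G)`. -/
noncomputable def cliqueNum [Fintype V] (G : SimpleGraph V) : ℕ :=
  sSup {n | ∃ s : Finset V, s.card = n ∧ G.IsClique ↑s}

/-- The chromatic number `χ(G)`, as a natural number. -/
noncomputable def chromNum [Fintype V] (G : SimpleGraph V) : ℕ :=
  sInf {m | G.Colorable m}

/-- Membership in the clique-constrained stable set polytope `QSTAB(G)`. -/
def InQSTAB (G : SimpleGraph V) (x : V → ℝ) : Prop :=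
  (∀ i, 0 ≤ x i ∧ x i ≤ 1) ∧
  ∀ Q : Finset V, G.IsClique ↑Q → ∑ i ∈ Q, x i ≤ 1

/-- Clique replacement at vertex `v`: replace `v` by a clique on `m` vertices,
each joined to every neighbor of `v`. -/
def cliqueReplace (G : SimpleGraph V) (v : V) (m : ℕ) :
    SimpleGraph ({u : V // u ≠ v} ⊕ Fin m) where
  Adj x y :=
    match x, y with
    | Sum.inl u, Sum.inl w => G.Adj u.1 w.1
    | Sum.inl u, Sum.inr _ => G.Adj u.1 v
    | Sum.inr _, Sum.inl w => G.Adj v w.1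
    | Sum.inr a, Sum.inr b => a ≠ b
  symm := by
    constructor
    rintro (u | a) (w | b) h
    · exact h.symm
    · exact h.symm
    · exact h.symm
    · exact h.symm
  loopless := by
    constructor
    rintro (u | a) h
    · exact G.irrefl h
    · exact h rfl

/-- Conditional χ-boundedness implies that convex relaxations estimate MWIS:
if a graph class `P` is closed under clique replacement and is `(t,γ)`-conditionally
χ-bounded (`χ(G) ≤ γ·ω(G)` whenever `α(G) ≥ t`), then for every weighted graph `G`
in the class, either `α(G) ≤ t − 1` (where the level-`t` SoS relaxation is exact),
or every point of `QSTAB(G)` has objective value at most `γ` times the maximum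
weight of an independent set; hence `t` rounds of SoS give a `γ`-estimation. -/
def Blowup (G : SimpleGraph V) (m : V → ℕ) : SimpleGraph (Σ i : V, Fin (m i)) where
  Adj x y := G.Adj x.1 y.1 ∨ (x.1 = y.1 ∧ x ≠ y)
  symm := by
    constructor
    rintro ⟨i, a⟩ ⟨j, b⟩ (h | ⟨h1, h2⟩)
    · exact Or.inl h.symm
    · exact Or.inr ⟨h1.symm, fun he => h2 he.symm⟩
  loopless := by
    constructor
    rintro ⟨i, a⟩ (h | ⟨_, h⟩)
    · exact G.irrefl h
    · exact h rfl

@[simp] lemma blowup_adj (G : SimpleGraph V) (m : V → ℕ) (x y : Σ i : V, Fin (m i)) :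
    (Blowup G m).Adj x y ↔ G.Adj x.1 y.1 ∨ (x.1 = y.1 ∧ x ≠ y) := Iff.rfl

lemma sigma_mk_eq_iff {ι : Type*} {κ : ι → Type*} {i : ι} (a b : κ i) :
    (⟨i, a⟩ : Σ j, κ j) = ⟨i, b⟩ ↔ a = b :=
  ⟨fun h => by simpa using h, fun h => by rw [h]⟩

lemma sigma_mk_ne_iff {ι : Type*} {κ : ι → Type*} {i : ι} (a b : κ i) :
    (⟨i, a⟩ : Σ j, κ j) ≠ ⟨i, b⟩ ↔ a ≠ b :=
  not_congr (sigma_mk_eq_iff a b)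

noncomputable def blowupOneIso (G : SimpleGraph V) (m : V → ℕ) (hm : ∀ i, m i = 1) :
    G ≃g Blowup G m := by
  refine ⟨Equiv.ofBijective (fun i => ⟨i, ⟨0, by rw [hm i]; exact Nat.one_pos⟩⟩) ⟨?_, ?_⟩, ?_⟩
  · intro i j h
    exact congrArg Sigma.fst h
  · rintro ⟨i, a⟩
    refine ⟨i, ?_⟩
    have : a = ⟨0, by rw [hm i]; exact Nat.one_pos⟩ := by
      apply Fin.ext
      have h1 := a.2
      have h2 := hm i
      omega
    rw [this]
  · intro a b
    constructor
    · rintro (h | ⟨h1, h2⟩)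
      · exact h
      · exact absurd (by subst h1; rfl) h2
    · intro h
      exact Or.inl h

noncomputable def blowupStepIso (G : SimpleGraph V) [DecidableEq V] (v : V) (m : V → ℕ) :
    Blowup (cliqueReplace G v (m v))
        (Sum.elim (fun u : {u : V // u ≠ v} => m u.1) (fun _ : Fin (m v) => 1))
      ≃g Blowup G m := by
  refine ⟨Equiv.ofBijective
    (fun z => match z with
      | ⟨Sum.inl u, a⟩ => ⟨u.1, a⟩
      | ⟨Sum.inr b, _⟩ => ⟨v, b⟩) ⟨?_, ?_⟩, ?_⟩
  · rintro ⟨(u | b), a⟩ ⟨(u' | b'), a'⟩ h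
    · have h1 : u.1 = u'.1 := congrArg Sigma.fst h
      have : u = u' := Subtype.ext h1
      subst this
      have : a = a' := (sigma_mk_eq_iff (κ := fun i => Fin (m i)) a a').mp h
      rw [this]
    · exact absurd (congrArg Sigma.fst h) u.2
    · exact absurd (congrArg Sigma.fst h).symm u'.2
    · have hb : b = b' := (sigma_mk_eq_iff (κ := fun i => Fin (m i)) b b').mp h
      subst hb
      have : a = a' := Fin.ext (by
        have h1 := a.2
        have h2 := a'.2
        simp only [Sum.elim_inr] at h1 h2
        omega)
      rw [this]
  · rintro ⟨i, a⟩
    by_cases h : i = v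
    · subst h
      exact ⟨⟨Sum.inr a, ⟨0, Nat.one_pos⟩⟩, rfl⟩
    · exact ⟨⟨Sum.inl ⟨i, h⟩, a⟩, rfl⟩
  · rintro ⟨(u | b), a⟩ ⟨(u' | b'), a'⟩
    · show (Blowup G m).Adj ⟨u.1, a⟩ ⟨u'.1, a'⟩ ↔ _
      constructor
      · rintro (h | ⟨h1, h2⟩)
        · exact Or.inl h
        · have : u = u' := Subtype.ext h1
          subst this
          have ha : a ≠ a' := (sigma_mk_ne_iff (κ := fun i => Fin (m i)) a a').mp h2
          exact Or.inr ⟨rfl, (sigma_mk_ne_iff (κ := fun z => Fin (Sum.elim (fun u : {u : V // u ≠ v} => m u.1) (fun _ : Fin (m v) => 1) z)) a a').mpr ha⟩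
      · rintro (h | ⟨h1, h2⟩)
        · exact Or.inl h
        · have : u = u' := by injection h1
          subst this
          have ha : a ≠ a' := (sigma_mk_ne_iff (κ := fun z => Fin (Sum.elim (fun u : {u : V // u ≠ v} => m u.1) (fun _ : Fin (m v) => 1) z)) a a').mp h2
          exact Or.inr ⟨rfl, (sigma_mk_ne_iff (κ := fun i => Fin (m i)) a a').mpr ha⟩
    · show (Blowup G m).Adj ⟨u.1, a⟩ ⟨v, b'⟩ ↔ _
      constructor
      · rintro (h | ⟨h1, h2⟩)
        · exact Or.inl h
        · exact absurd h1 u.2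
      · rintro (h | ⟨h1, h2⟩)
        · exact Or.inl h
        · exact absurd h1 (by simp)
    · show (Blowup G m).Adj ⟨v, b⟩ ⟨u'.1, a'⟩ ↔ _
      constructor
      · rintro (h | ⟨h1, h2⟩)
        · exact Or.inl h
        · exact absurd h1.symm u'.2
      · rintro (h | ⟨h1, h2⟩)
        · exact Or.inl h
        · exact absurd h1 (by simp)
    · show (Blowup G m).Adj ⟨v, b⟩ ⟨v, b'⟩ ↔ _
      constructor
      · rintro (h | ⟨h1, h2⟩)
        · exact absurd h (G.irrefl)
        · have hb : b ≠ b' := (sigma_mk_ne_iff (κ := fun i => Fin (m i)) b b').mp h2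
          exact Or.inl hb
      · rintro (h | ⟨h1, h2⟩)
        · exact Or.inr ⟨rfl, (sigma_mk_ne_iff (κ := fun i => Fin (m i)) b b').mpr h⟩
        · have hb : b = b' := by injection h1
          subst hb
          have : a = a' := Fin.ext (by
            have h1 := a.2
            have h2 := a'.2
            simp only [Sum.elim_inr] at h1 h2
            omega)
          subst this
          exact absurd rfl h2

lemma blowup_in_P
    (P : ∀ (W : Type) [Fintype W] [DecidableEq W], SimpleGraph W → Prop)
    (hclosed : ∀ (W : Type) [Fintype W] [DecidableEq W] (G : SimpleGraph W)
      (v : W) (m : ℕ), P W G → P _ (cliqueReplace G v m)) :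
    ∀ (n : ℕ) (W : Type) [Fintype W] [DecidableEq W] (G : SimpleGraph W),
      P W G → ∀ m : W → ℕ,
      (univ.filter fun i => m i ≠ 1).card ≤ n →
      ∃ (W' : Type) (_ : Fintype W') (_ : DecidableEq W') (H : SimpleGraph W'),
        P W' H ∧ Nonempty (H ≃g Blowup G m) := by
  intro n
  induction n with
  | zero =>
    intro W _ _ G hP m hcard
    have hall : ∀ i, m i = 1 := by
      intro i
      by_contra hi
      have : i ∈ univ.filter fun i => m i ≠ 1 := mem_filter.mpr ⟨mem_univ _, hi⟩
      have := card_pos.mpr ⟨i, this⟩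
      omega
    exact ⟨W, inferInstance, inferInstance, G, hP, ⟨blowupOneIso G m hall⟩⟩
  | succ n ih =>
    intro W _ _ G hP m hcard
    by_cases hall : ∀ i, m i = 1
    · exact ⟨W, inferInstance, inferInstance, G, hP, ⟨blowupOneIso G m hall⟩⟩
    · push_neg at hall
      obtain ⟨v, hv⟩ := hall
      have hvmem : v ∈ univ.filter fun i => m i ≠ 1 := mem_filter.mpr ⟨mem_univ _, hv⟩
      set m' : ({u : W // u ≠ v} ⊕ Fin (m v)) → ℕ :=
        Sum.elim (fun u : {u : W // u ≠ v} => m u.1) (fun _ : Fin (m v) => 1) with hm'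
      have hcard' : (univ.filter fun z => m' z ≠ 1).card ≤ n := by
        have hle : (univ.filter fun z => m' z ≠ 1).card ≤
            ((univ.filter fun i => m i ≠ 1).erase v).card := by
          apply card_le_card_of_injOn (fun z => Sum.elim (fun u => u.1) (fun _ => v) z)
          · rintro (u | b) hz
            · simp only [mem_coe, mem_filter, mem_univ, true_and, hm', Sum.elim_inl] at hz
              exact mem_erase.mpr ⟨u.2, mem_filter.mpr ⟨mem_univ _, hz⟩⟩
            · simp only [mem_coe, mem_filter, mem_univ, true_and, hm', Sum.elim_inr] at hz
              exact absurd rfl hz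
          · rintro (u | b) hz (u' | b') hz' he
            · simp only [Sum.elim_inl] at he
              exact congrArg Sum.inl (Subtype.ext he)
            · simp only [coe_filter, Set.mem_setOf_eq, hm', Sum.elim_inr] at hz'
              exact absurd rfl hz'.2
            · simp only [coe_filter, Set.mem_setOf_eq, hm', Sum.elim_inr] at hz
              exact absurd rfl hz.2
            · simp only [coe_filter, Set.mem_setOf_eq, hm', Sum.elim_inr] at hz
              exact absurd rfl hz.2
        have := card_erase_of_mem hvmem
        have hpos := card_pos.mpr ⟨v, hvmem⟩
        omega
      obtain ⟨W', fi, de, H, hPH, ⟨e⟩⟩ :=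
        ih _ (cliqueReplace G v (m v)) (hclosed W G v (m v) hP) m' hcard'
      exact ⟨W', fi, de, H, hPH, ⟨e.trans (blowupStepIso G v m)⟩⟩

lemma bddAbove_card_set {α : Type*} [Fintype α] (p : Finset α → Prop) :
    BddAbove {n | ∃ s : Finset α, s.card = n ∧ p s} :=
  ⟨Fintype.card α, fun n ⟨s, hs, _⟩ => hs ▸ card_le_univ s⟩

lemma isIndep_empty (G : SimpleGraph V) : IsIndep G (∅ : Finset V) :=
  fun u hu => absurd hu (notMem_empty u)

theorem conditional_chi_bounded_estimation
    (t : ℕ) (γ : ℝ) (ht : 1 ≤ t)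
    (P : ∀ (W : Type) [Fintype W] [DecidableEq W], SimpleGraph W → Prop)
    (hclosed : ∀ (W : Type) [Fintype W] [DecidableEq W] (G : SimpleGraph W)
      (v : W) (m : ℕ), P W G → P _ (cliqueReplace G v m))
    (hχ : ∀ (W : Type) [Fintype W] [DecidableEq W] (G : SimpleGraph W),
      P W G → t ≤ indepNum G → (chromNum G : ℝ) ≤ γ * (cliqueNum G : ℝ)) :
    ∀ (W : Type) [Fintype W] [DecidableEq W] (G : SimpleGraph W) (w : W → ℝ),
      (∀ i, 0 ≤ w i) → P W G →
      indepNum G ≤ t - 1 ∨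
      ∀ x : W → ℝ, InQSTAB G x →
        ∃ s : Finset W, IsIndep G s ∧ ∑ i, w i * x i ≤ γ * ∑ i ∈ s, w i := by
  classical
  intro W _ _ G w hw hP
  by_cases hα : indepNum G ≤ t - 1
  · exact Or.inl hα
  right
  have htα : t ≤ indepNum G := by omega
  intro x hx
  obtain ⟨hx01, hxQ⟩ := hx
  -- maximum weight independent set
  obtain ⟨s₀, hs₀mem, hs₀max⟩ := Finset.exists_max_image
    ((univ : Finset (Finset W)).filter fun s => IsIndep G s) (fun s => ∑ i ∈ s, w i)
    ⟨∅, mem_filter.mpr ⟨mem_univ _, isIndep_empty G⟩⟩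
  have hs₀ : IsIndep G s₀ := (mem_filter.mp hs₀mem).2
  set Wstar := ∑ i ∈ s₀, w i with hWdef
  have hmax : ∀ s : Finset W, IsIndep G s → ∑ i ∈ s, w i ≤ Wstar := fun s hs =>
    hs₀max s (mem_filter.mpr ⟨mem_univ _, hs⟩)
  have hWstar0 : 0 ≤ Wstar := by
    have := hmax ∅ (isIndep_empty G)
    simpa using this
  refine ⟨s₀, hs₀, ?_⟩
  -- a maximum independent set
  have hImem : ∃ s : Finset W, s.card = indepNum G ∧ IsIndep G s :=
    Nat.sSup_mem (s := {n | ∃ s : Finset W, s.card = n ∧ IsIndep G s})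
      ⟨0, ∅, card_empty, isIndep_empty G⟩ (bddAbove_card_set _)
  obtain ⟨sα, hsαcard, hsαind⟩ := hImem
  have hsαt : t ≤ sα.card := hsαcard ▸ htα
  obtain ⟨v0, hv0⟩ := card_pos.mp (show 0 < sα.card by omega)
  -- γ is positive
  have hγpos : 0 < γ := by
    have hχG := hχ W G hP htα
    have hω1 : 1 ≤ cliqueNum G := by
      refine le_csSup (bddAbove_card_set _) ⟨{v0}, card_singleton v0, ?_⟩
      simp
    have hχ1 : 1 ≤ chromNum G := by
      by_contra h
      have h0 : chromNum G = 0 := by omega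
      have hmem : chromNum G ∈ {m | G.Colorable m} :=
        Nat.sInf_mem ⟨Fintype.card W, G.colorable_of_fintype⟩
      rw [h0] at hmem
      obtain ⟨C⟩ := hmem
      exact (C v0).elim0
    have e1 : (1:ℝ) ≤ (chromNum G : ℝ) := by exact_mod_cast hχ1
    have e2 : (1:ℝ) ≤ (cliqueNum G : ℝ) := by exact_mod_cast hω1
    nlinarith [hχG]
  set c : ℝ := (Fintype.card W : ℝ) with hcdef
  have hc0 : 0 ≤ c := Nat.cast_nonneg _
  -- the key estimate, for every n
  have key : ∀ n : ℕ, ∑ i, w i * x i ≤ γ * Wstar + γ * c * Wstar / (n + 1) := by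
    intro n
    set N : ℝ := (n : ℝ) + 1 with hNdef
    have hN0 : (0:ℝ) < N := by positivity
    set m : W → ℕ := fun i => ⌊N * x i⌋₊ + 1 with hmdef
    obtain ⟨W', fi, de, H, hPH, ⟨e⟩⟩ := blowup_in_P P hclosed _ W G hP m le_rfl
    letI := fi
    letI := de
    -- independence number of H is at least t
    have hindepH : t ≤ indepNum H := by
      set f : W → (Σ i, Fin (m i)) := fun i => ⟨i, ⟨0, Nat.succ_pos _⟩⟩ with hfdef
      have hfinj : Function.Injective f := fun i j h => congrArg Sigma.fst h
      set sH : Finset W' := (sα.image f).image e.symm with hsHdef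
      have hcard : sH.card = sα.card := by
        rw [hsHdef, card_image_of_injective _ e.symm.injective,
          card_image_of_injective _ hfinj]
      have hind : IsIndep H sH := by
        intro a ha b hb hab hadj
        rw [hsHdef] at ha hb
        obtain ⟨p, hp, rfl⟩ := mem_image.mp ha
        obtain ⟨q, hq, rfl⟩ := mem_image.mp hb
        obtain ⟨i, hi, rfl⟩ := mem_image.mp hp
        obtain ⟨j, hj, rfl⟩ := mem_image.mp hq
        have hij : i ≠ j := by
          intro h; subst h; exact hab rfl
        have hBadj : (Blowup G m).Adj (f i) (f j) := e.symm.map_rel_iff.mp hadj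
        rcases hBadj with h | ⟨h1, -⟩
        · exact hsαind i hi j hj hij h
        · exact hij h1
      have : sH.card ≤ indepNum H := le_csSup (bddAbove_card_set _) ⟨sH, rfl, hind⟩
      omega
    have hχH := hχ W' H hPH hindepH
    -- clique number of H is at most N + c
    have hωH : (cliqueNum H : ℝ) ≤ N + c := by
      have hmemC : ∃ s : Finset W', s.card = cliqueNum H ∧ H.IsClique ↑s :=
        Nat.sSup_mem (s := {n | ∃ s : Finset W', s.card = n ∧ H.IsClique ↑s})
          ⟨0, ∅, card_empty, by simp⟩ (bddAbove_card_set _)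
      obtain ⟨sc, hsc, hscq⟩ := hmemC
      set K : Finset (Σ i, Fin (m i)) := sc.image e with hKdef
      have hKcard : K.card = sc.card := card_image_of_injective _ e.injective
      have hKadj : ∀ p ∈ K, ∀ q ∈ K, p ≠ q → (Blowup G m).Adj p q := by
        intro p hp q hq hpq
        rw [hKdef] at hp hq
        obtain ⟨a, ha, rfl⟩ := mem_image.mp hp
        obtain ⟨b, hb, rfl⟩ := mem_image.mp hq
        have hab : a ≠ b := by intro h; subst h; exact hpq rfl
        exact e.map_rel_iff.mpr (hscq (mem_coe.mpr ha) (mem_coe.mpr hb) hab)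
      set Q : Finset W := K.image Sigma.fst with hQdef
      have hQclique : G.IsClique ↑Q := by
        intro i hi j hj hij
        rw [hQdef, coe_image] at hi hj
        obtain ⟨p, hp, rfl⟩ := hi
        obtain ⟨q, hq, rfl⟩ := hj
        have hpq : p ≠ q := by intro h; subst h; exact hij rfl
        rcases hKadj p (mem_coe.mp hp) q (mem_coe.mp hq) hpq with h | ⟨h1, -⟩
        · exact h
        · exact absurd h1 hij
      have hKle : K.card ≤ ∑ i ∈ Q, m i := by
        have hKsub : K ⊆ Q.sigma fun _ => univ := fun p hp =>
          mem_sigma.mpr ⟨mem_image_of_mem _ hp, mem_univ _⟩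
        calc K.card ≤ (Q.sigma fun _ => (univ : Finset (Fin (m _)))).card :=
              card_le_card hKsub
          _ = ∑ i ∈ Q, m i := by rw [card_sigma]; simp
      have hQsum : (∑ i ∈ Q, (m i : ℝ)) ≤ N + c := by
        have h1 : ∀ i ∈ Q, (m i : ℝ) ≤ N * x i + 1 := by
          intro i _
          have hfl : (⌊N * x i⌋₊ : ℝ) ≤ N * x i :=
            Nat.floor_le (mul_nonneg hN0.le (hx01 i).1)
          simp only [hmdef]
          push_cast
          linarith
        have hQx := hxQ Q hQclique
        have hQc : (Q.card : ℝ) ≤ c := by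
          rw [hcdef]; exact_mod_cast card_le_univ Q
        calc ∑ i ∈ Q, (m i:ℝ) ≤ ∑ i ∈ Q, (N * x i + 1) := sum_le_sum h1
          _ = N * (∑ i ∈ Q, x i) + Q.card := by
              rw [Finset.sum_add_distrib, ← Finset.mul_sum, Finset.sum_const,
                nsmul_eq_mul, mul_one]
          _ ≤ N * 1 + c := by nlinarith
          _ = N + c := by ring
      calc (cliqueNum H:ℝ) = (sc.card:ℝ) := by exact_mod_cast hsc.symm
        _ = (K.card : ℝ) := by rw [hKcard]
        _ ≤ ((∑ i ∈ Q, m i : ℕ) : ℝ) := by exact_mod_cast hKle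
        _ = ∑ i ∈ Q, (m i:ℝ) := by push_cast; rfl
        _ ≤ N + c := hQsum
    -- a proper coloring of H with chromNum H colors
    set k := chromNum H with hkdef
    have hkcol : H.Colorable k :=
      Nat.sInf_mem (⟨Fintype.card W', H.colorable_of_fintype⟩ :
        Set.Nonempty {m | H.Colorable m})
    obtain ⟨C⟩ := hkcol
    set CB : (Σ i, Fin (m i)) → Fin k := fun b => C (e.symm b) with hCBdef
    have hCBvalid : ∀ p q, (Blowup G m).Adj p q → CB p ≠ CB q := by
      intro p q hpq
      exact C.valid (e.symm.map_rel_iff.mpr hpq)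
    have hsum1 : ∑ b : (Σ i, Fin (m i)), w b.1 = ∑ i, (m i : ℝ) * w i := by
      rw [← Finset.univ_sigma_univ, Finset.sum_sigma]
      simp [mul_comm]
    have hclass : ∀ j : Fin k, ∑ b ∈ univ.filter (fun b => CB b = j), w b.1 ≤ Wstar := by
      intro j
      set Sj := univ.filter (fun b : Σ i, Fin (m i) => CB b = j) with hSjdef
      have hinj : ∀ p ∈ Sj, ∀ q ∈ Sj, p.1 = q.1 → p = q := by
        intro p hp q hq hfst
        by_contra hne
        have hadj : (Blowup G m).Adj p q := Or.inr ⟨hfst, hne⟩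
        rw [hSjdef, mem_filter] at hp hq
        exact hCBvalid p q hadj (hp.2.trans hq.2.symm)
      have himg : ∑ i ∈ Sj.image Sigma.fst, w i = ∑ b ∈ Sj, w b.1 :=
        Finset.sum_image hinj
      have hQind : IsIndep G (Sj.image Sigma.fst) := by
        intro i hi j' hj' hij hadj
        obtain ⟨p, hp, rfl⟩ := mem_image.mp hi
        obtain ⟨q, hq, rfl⟩ := mem_image.mp hj'
        have hBadj : (Blowup G m).Adj p q := Or.inl hadj
        rw [hSjdef, mem_filter] at hp hq
        exact hCBvalid p q hBadj (hp.2.trans hq.2.symm)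
      calc ∑ b ∈ Sj, w b.1 = ∑ i ∈ Sj.image Sigma.fst, w i := himg.symm
        _ ≤ Wstar := hmax _ hQind
    have hsum2 : ∑ i, (m i : ℝ) * w i ≤ k * Wstar := by
      rw [← hsum1, ← Finset.sum_fiberwise univ CB (fun b => w b.1)]
      calc ∑ j : Fin k, ∑ b ∈ univ.filter (fun b => CB b = j), w b.1
          ≤ ∑ _j : Fin k, Wstar := sum_le_sum fun j _ => hclass j
        _ = k * Wstar := by simp [mul_comm]
    -- chain of inequalities
    have hterm : ∀ i, w i * x i ≤ (m i : ℝ) * w i / N := by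
      intro i
      have hfl : N * x i < (m i : ℝ) := by
        have h0 := Nat.lt_floor_add_one (N * x i)
        simp only [hmdef]
        push_cast
        linarith
      rw [le_div_iff₀ hN0]
      nlinarith [hw i]
    have hkN : (k:ℝ) * Wstar ≤ γ * (N + c) * Wstar := by
      have h1 : (k:ℝ) ≤ γ * (N + c) := by
        refine hχH.trans ?_
        have := mul_le_mul_of_nonneg_left hωH hγpos.le
        linarith
      exact mul_le_mul_of_nonneg_right h1 hWstar0
    calc ∑ i, w i * x i ≤ ∑ i, (m i:ℝ) * w i / N := sum_le_sum fun i _ => hterm i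
      _ = (∑ i, (m i:ℝ) * w i) / N := by rw [← sum_div]
      _ ≤ ((k:ℝ) * Wstar) / N := by gcongr
      _ ≤ (γ * (N + c) * Wstar) / N := by gcongr
      _ = γ * Wstar + γ * c * Wstar / N := by
          field_simp
  -- pass to the limit
  by_contra hcon
  push_neg at hcon
  set D := γ * c * Wstar with hDdef
  have hD0 : 0 ≤ D := mul_nonneg (mul_nonneg hγpos.le hc0) hWstar0
  set ε := ∑ i, w i * x i - γ * Wstar with hεdef
  have hε0 : 0 < ε := by rw [hεdef]; linarith
  obtain ⟨n, hn⟩ := exists_nat_gt (D / ε)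
  have hk := key n
  have hn1 : (0:ℝ) < (n:ℝ) + 1 := by positivity
  have h1 : ε * ((n:ℝ) + 1) ≤ D := by
    have : ε ≤ D / ((n:ℝ)+1) := by rw [hεdef]; linarith
    calc ε * ((n:ℝ)+1) ≤ (D / ((n:ℝ)+1)) * ((n:ℝ)+1) :=
          mul_le_mul_of_nonneg_right this hn1.le
      _ = D := by field_simp
  have h2 : D < ε * n := by
    rw [div_lt_iff₀ hε0] at hn
    linarith [mul_comm ε (n:ℝ)]
  nlinarith
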